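/- Let a, h, k be positive real numbers with k < (3/4)·(√8/4)·(h²/a), and let N ≥ 1 be a natural number. Then for every j ∈ Fin N, |R(i·k·(a/h²)·(−5/2 + (8/3)·cos(2πj/N) − (1/6)·cos(4πj/N)))| ≤ 1, with strict inequality whenever −5/2 + (8/3)·cos(2πj/N) − (1/6)·cos(4πj/N) ≠ 0. (Linearized stability of the RK4 scheme with fourth-order central differencing and periodic boundary conditions for the linear Schrödinger equation i∂Ψ/∂t + a∇²Ψ = 0 in one dimension; the fourth-order bound is 3/4 of the second-order bound.) -/

import Mathlib

open Complex

noncomputable def R (p : ℂ) : ℂ := 1 + p + p ^ 2 / 2 + p ^ 3 / 6 + p ^ 4 / 24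

lemma key (y : ℝ) : Complex.normSq (R (Complex.I * (y : ℂ))) = 1 + y^6*(y^2-8)/576 := by
  have hR : R (Complex.I * (y : ℂ)) =
      ((1 - y^2/2 + y^4/24 : ℝ) : ℂ) + ((y - y^3/6 : ℝ) : ℂ) * Complex.I := by
    simp only [R]
    push_cast
    ring_nf
    rw [Complex.I_sq, show (Complex.I:ℂ)^3 = -Complex.I by rw [pow_succ, Complex.I_sq]; ring,
      show (Complex.I:ℂ)^4 = 1 by rw [pow_succ, show (Complex.I:ℂ)^3 = -Complex.I by rw [pow_succ, Complex.I_sq]; ring]; simp]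
    ring
  rw [hR]
  rw [Complex.normSq_add_mul_I]
  ring

lemma abs_le_of_sq (y : ℝ) (h8 : y^2 < 8) :
    ‖R (Complex.I * (y : ℂ))‖ ≤ 1 ∧
      (y ≠ 0 → ‖R (Complex.I * (y : ℂ))‖ < 1) := by
  have hsq : ‖R (Complex.I * (y : ℂ))‖ ^ 2 = 1 + y^6*(y^2-8)/576 := by
    rw [Complex.sq_norm, key]
  have hnn := norm_nonneg (R (Complex.I * (y : ℂ)))
  constructor
  · have h1 : ‖R (Complex.I * (y : ℂ))‖ ^ 2 ≤ 1 := by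
      rw [hsq]; nlinarith [sq_nonneg (y^3)]
    nlinarith
  · intro hy
    have h1 : ‖R (Complex.I * (y : ℂ))‖ ^ 2 < 1 := by
      rw [hsq]
      have : 0 < y^6 := by positivity
      nlinarith
    nlinarith

set_option maxHeartbeats 800000 in
/-- Linearized stability of RK4 with fourth-order central differencing and
periodic boundary conditions for the 1D linear Schrödinger equation: if
`k < (3/4)·(√8/4)·(h²/a)` then
`|R(i·k·(a/h²)·(−5/2 + (8/3)·cos(2πj/N) − (1/6)·cos(4πj/N)))| ≤ 1` for every
eigenvalue index `j`, strictly whenever the eigenvalue is nonzero. -/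
theorem rk4_cd4_periodic_stable (a h k : ℝ) (ha : 0 < a) (hh : 0 < h) (hk : 0 < k)
    (hbound : k < 3 / 4 * (Real.sqrt 8 / 4) * (h ^ 2 / a)) (N : ℕ) (hN : 1 ≤ N) :
    ∀ j : Fin N,
      ‖R (Complex.I *
          ((k * (a / h ^ 2) *
            (-5/2 + (8/3) * Real.cos (2 * Real.pi * (j : ℕ) / N)
              - (1/6) * Real.cos (4 * Real.pi * (j : ℕ) / N)) : ℝ) : ℂ))‖ ≤ 1 ∧
      ((-5/2 + (8/3) * Real.cos (2 * Real.pi * (j : ℕ) / N)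
          - (1/6) * Real.cos (4 * Real.pi * (j : ℕ) / N) : ℝ) ≠ 0 →
        ‖R (Complex.I *
          ((k * (a / h ^ 2) *
            (-5/2 + (8/3) * Real.cos (2 * Real.pi * (j : ℕ) / N)
              - (1/6) * Real.cos (4 * Real.pi * (j : ℕ) / N)) : ℝ) : ℂ))‖ < 1) := by
  intro j
  set θ : ℝ := 2 * Real.pi * (j : ℕ) / N with hθ
  have hcos2 : Real.cos (4 * Real.pi * (j : ℕ) / N) = 2 * Real.cos θ ^ 2 - 1 := by
    rw [show (4 * Real.pi * (j : ℕ) / N : ℝ) = 2 * θ by rw [hθ]; ring, Real.cos_two_mul]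
  set c : ℝ := Real.cos θ with hc
  set μ : ℝ := -5/2 + (8/3) * Real.cos (2 * Real.pi * (j : ℕ) / N)
      - (1/6) * Real.cos (4 * Real.pi * (j : ℕ) / N) with hμ
  have hμc : μ = -7/3 + (8/3) * c - c^2/3 := by rw [hμ, hcos2]; ring
  have hc1 : -1 ≤ c := Real.neg_one_le_cos θ
  have hc2 : c ≤ 1 := Real.cos_le_one θ
  have hμlo : -16/3 ≤ μ := by rw [hμc]; nlinarith
  have hμhi : μ ≤ 0 := by rw [hμc]; nlinarith
  set y : ℝ := k * (a / h ^ 2) * μ with hy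
  have hka : 0 < k * (a / h ^ 2) := by positivity
  have hs8 : Real.sqrt 8 ^ 2 = 8 := Real.sq_sqrt (by norm_num)
  have hs8pos : 0 < Real.sqrt 8 := Real.sqrt_pos.mpr (by norm_num)
  have hkb : k * (a / h ^ 2) < 3 * Real.sqrt 8 / 16 := by
    have hmul := mul_lt_mul_of_pos_right hbound (show (0:ℝ) < a / h^2 by positivity)
    have heq : (3 / 4 * (Real.sqrt 8 / 4) * (h ^ 2 / a)) * (a / h^2) = 3 * Real.sqrt 8 / 16 := by
      field_simp
      ring
    linarith [heq ▸ hmul]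
  have h8 : y ^ 2 < 8 := by
    have h932 : (3*Real.sqrt 8/16)^2 = 9/32 := by
      rw [div_pow, mul_pow, hs8]; norm_num
    have hq2 : (k*(a/h^2))^2 < 9/32 := by
      have := pow_lt_pow_left₀ hkb hka.le (n := 2) (by norm_num)
      linarith [h932 ▸ this]
    have hμsq : μ^2 ≤ 256/9 := by nlinarith
    rw [hy, mul_pow]
    nlinarith [sq_nonneg (k*(a/h^2)), sq_nonneg μ]
  have := abs_le_of_sq y h8
  refine ⟨this.1, fun hμ0 => this.2 ?_⟩
  exact mul_ne_zero (ne_of_gt hka) hμ0
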